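/- Let r ≥ 2, n sufficiently large in terms of r, and let δ ≥ 1 with δ = o(n^r). For every permutation ψ ∈ S_n: if the induced permutation ψ̃ on r-subsets of [n] has at least (1/2)·C(n,r) − δ two-cycles, then ψ has at least n/2 − r·δ^{1/r} two-cycles. -/

import Mathlib

lemma aux_pow_le_choose : ∀ (r : ℕ), ∀ f : ℕ, r ≤ f → f ^ r ≤ r ^ r * f.choose r := by
  intro r
  induction r with
  | zero => intro f _; simp
  | succ k ih =>
    intro f hf
    rcases Nat.eq_zero_or_pos k with hk | hk
    · subst hk; simpa using Nat.le_refl f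
    obtain ⟨m, rfl⟩ : ∃ m, f = m + 1 := ⟨f - 1, by omega⟩
    have hmk : k ≤ m := by omega
    have h1 : k * (m + 1) ≤ (k + 1) * m := by nlinarith
    have h2 : (k * (m + 1)) ^ k ≤ ((k + 1) * m) ^ k := Nat.pow_le_pow_left h1 k
    have h3 : k ^ k * (m + 1) ^ k ≤ (k + 1) ^ k * m ^ k := by
      simpa [mul_pow] using h2
    have h4 : (k + 1) ^ k * m ^ k ≤ (k + 1) ^ k * (k ^ k * m.choose k) :=
      Nat.mul_le_mul_left _ (ih m hmk)
    have h5 : (m + 1) ^ k ≤ (k + 1) ^ k * m.choose k := by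
      have hpos : 0 < k ^ k := Nat.pow_pos hk
      have := h3.trans h4
      rw [mul_comm ((k+1)^k) (k ^ k * m.choose k)] at this
      exact Nat.le_of_mul_le_mul_left (by linarith [this]) hpos
    have h6 : (m + 1) * m.choose k = (m+1).choose (k+1) * (k+1) := Nat.add_one_mul_choose_eq m k
    calc (m + 1) ^ (k + 1) = (m + 1) * (m + 1) ^ k := by ring
      _ ≤ (m + 1) * ((k + 1) ^ k * m.choose k) := Nat.mul_le_mul_left _ h5
      _ = (k + 1) ^ k * ((m + 1) * m.choose k) := by ring
      _ = (k + 1) ^ k * ((m+1).choose (k+1) * (k+1)) := by rw [h6]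
      _ = (k + 1) ^ (k + 1) * (m+1).choose (k+1) := by ring

section
variable {n : ℕ} (ψ : Equiv.Perm (Fin n)) (r : ℕ)

-- bijection between the ordered-pair filter on r-subsets and good sets
lemma card_pairs_sets :
    ((Finset.univ ×ˢ Finset.univ : Finset (Finset (Fin n) × Finset (Fin n))).filter
        (fun p => p.1.card = r ∧ p.1 ≠ p.2 ∧ p.1.image ψ = p.2 ∧ p.2.image ψ = p.1)).card
      = (((Finset.univ : Finset (Fin n)).powersetCard r).filter
        (fun A => A ≠ A.image ψ ∧ (A.image ψ).image ψ = A)).card := by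
  classical
  refine Finset.card_bij' (fun p _ => p.1) (fun A _ => (A, A.image ψ)) ?_ ?_ ?_ ?_
  · intro p hp
    simp only [Finset.mem_filter, Finset.mem_product] at hp
    obtain ⟨-, hc, hne, h1, h2⟩ := hp
    simp only [Finset.mem_filter, Finset.mem_powersetCard_univ]
    exact ⟨hc, by rw [h1]; exact fun h => hne h, by rw [h1, h2]⟩
  · intro A hA
    simp only [Finset.mem_filter, Finset.mem_powersetCard_univ] at hA
    obtain ⟨hc, hne, h2⟩ := hA
    exact Finset.mem_filter.2 ⟨Finset.mem_product.2 ⟨Finset.mem_univ _, Finset.mem_univ _⟩,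
      hc, hne, rfl, h2⟩
  · intro p hp
    simp only [Finset.mem_filter, Finset.mem_product] at hp
    exact Prod.ext rfl hp.2.2.2.1
  · intro A hA; rfl

lemma card_pairs_pts :
    ((Finset.univ ×ˢ Finset.univ : Finset (Fin n × Fin n)).filter
        (fun p => p.1 ≠ p.2 ∧ ψ p.1 = p.2 ∧ ψ p.2 = p.1)).card
      = ((Finset.univ : Finset (Fin n)).filter (fun a => ψ a ≠ a ∧ ψ (ψ a) = a)).card := by
  classical
  refine Finset.card_bij' (fun p _ => p.1) (fun a _ => (a, ψ a)) ?_ ?_ ?_ ?_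
  · intro p hp
    simp only [Finset.mem_filter, Finset.mem_product] at hp
    obtain ⟨-, hne, h1, h2⟩ := hp
    simp only [Finset.mem_filter, Finset.mem_univ, true_and]
    exact ⟨by rw [h1]; exact fun h => hne h.symm, by rw [h1, h2]⟩
  · intro a ha
    simp only [Finset.mem_filter, Finset.mem_univ, true_and] at ha
    exact Finset.mem_filter.2 ⟨Finset.mem_product.2 ⟨Finset.mem_univ _, Finset.mem_univ _⟩,
      fun h => ha.1 h.symm, rfl, ha.2⟩
  · intro p hp
    simp only [Finset.mem_filter, Finset.mem_product] at hp
    exact Prod.ext rfl hp.2.2.1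
  · intro a ha; rfl

end

section
variable {n : ℕ} (ψ : Equiv.Perm (Fin n)) (r : ℕ)

-- L3 : fixed points give bad sets
lemma fix_choose_le_bad :
    ((Finset.univ.filter (fun a : Fin n => ψ a = a)).card).choose r ≤
      (((Finset.univ : Finset (Fin n)).powersetCard r).filter
        (fun A => ¬(A ≠ A.image ψ ∧ (A.image ψ).image ψ = A))).card := by
  classical
  set F := Finset.univ.filter (fun a : Fin n => ψ a = a) with hF
  have hsub : F.powersetCard r ⊆ ((Finset.univ : Finset (Fin n)).powersetCard r).filter
      (fun A => ¬(A ≠ A.image ψ ∧ (A.image ψ).image ψ = A)) := by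
    intro A hA
    rw [Finset.mem_powersetCard] at hA
    have himg : A.image ψ = A := by
      have : ∀ x ∈ A, ψ x = x := fun x hx => (Finset.mem_filter.1 (hA.1 hx)).2
      rw [show A.image ψ = A.image id from Finset.image_congr (fun x hx => this x hx),
        Finset.image_id]
    refine Finset.mem_filter.2 ⟨Finset.mem_powersetCard_univ.2 hA.2, ?_⟩
    exact fun hc => hc.1 himg.symm
  calc F.card.choose r = (F.powersetCard r).card := (Finset.card_powersetCard r F).symm
    _ ≤ _ := Finset.card_le_card hsub

-- L4 : double counting for non-2-periodic points
lemma bad_pts_bound (hr : 1 ≤ r) :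
    (Finset.univ.filter (fun a : Fin n => ψ (ψ a) ≠ a)).card * ((n-2).choose (r-1)) ≤
      r * (((Finset.univ : Finset (Fin n)).powersetCard r).filter
        (fun A => ¬(A ≠ A.image ψ ∧ (A.image ψ).image ψ = A))).card := by
  classical
  set B := Finset.univ.filter (fun a : Fin n => ψ (ψ a) ≠ a) with hB
  set Bd := ((Finset.univ : Finset (Fin n)).powersetCard r).filter
      (fun A => ¬(A ≠ A.image ψ ∧ (A.image ψ).image ψ = A)) with hBd
  have step1 : ∀ a ∈ B, (n-2).choose (r-1) ≤ (Bd.filter (fun A => a ∈ A)).card := by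
    intro a ha
    have hane : ψ (ψ a) ≠ a := (Finset.mem_filter.1 ha).2
    have hac : a ≠ ψ (ψ a) := fun h => hane h.symm
    have hcard : ((Finset.univ : Finset (Fin n)) \ {a, ψ (ψ a)}).card = n - 2 := by
      rw [Finset.card_sdiff_of_subset (Finset.subset_univ _), Finset.card_univ, Fintype.card_fin,
        Finset.card_pair hac]
    have := Finset.card_le_card_of_injOn (f := fun s => insert a s)
      (s := (((Finset.univ : Finset (Fin n)) \ {a, ψ (ψ a)})).powersetCard (r-1))
      (t := Bd.filter (fun A => a ∈ A)) ?_ ?_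
    · rwa [Finset.card_powersetCard, hcard] at this
    · intro s hs
      rw [Finset.mem_coe, Finset.mem_powersetCard] at hs
      obtain ⟨hs1, hs2⟩ := hs
      have has : a ∉ s := fun h => by
        have := hs1 h; rw [Finset.mem_sdiff] at this
        exact this.2 (Finset.mem_insert_self _ _)
      have hcs : ψ (ψ a) ∉ s := fun h => by
        have := hs1 h; rw [Finset.mem_sdiff] at this
        exact this.2 (Finset.mem_insert_of_mem (Finset.mem_singleton_self _))
      have hcins : ψ (ψ a) ∉ insert a s := by
        simp only [Finset.mem_insert]
        rintro (h | h)
        · exact hane h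
        · exact hcs h
      refine Finset.mem_filter.2 ⟨Finset.mem_filter.2 ⟨?_, ?_⟩, Finset.mem_insert_self _ _⟩
      · show insert a s ∈ Finset.powersetCard r Finset.univ
        rw [Finset.mem_powersetCard_univ, Finset.card_insert_of_notMem has, hs2]
        omega
      · rintro ⟨-, h2⟩
        apply hcins
        have h2' : Finset.image (⇑ψ) (Finset.image (⇑ψ) (insert a s)) = insert a s := h2
        rw [← h2']
        exact Finset.mem_image_of_mem _ (Finset.mem_image_of_mem _ (Finset.mem_insert_self _ _))
    · intro s hs t ht hst
      rw [Finset.mem_coe, Finset.mem_powersetCard] at hs ht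
      have has : a ∉ s := fun h => by
        have := hs.1 h; rw [Finset.mem_sdiff] at this
        exact this.2 (Finset.mem_insert_self _ _)
      have hat : a ∉ t := fun h => by
        have := ht.1 h; rw [Finset.mem_sdiff] at this
        exact this.2 (Finset.mem_insert_self _ _)
      have hst' : insert a s = insert a t := hst
      have : (insert a s).erase a = (insert a t).erase a := by rw [hst']
      rwa [Finset.erase_insert has, Finset.erase_insert hat] at this
  have step2 : B.card * ((n-2).choose (r-1)) ≤ ∑ a ∈ B, (Bd.filter (fun A => a ∈ A)).card := by
    calc B.card * ((n-2).choose (r-1)) = ∑ _a ∈ B, (n-2).choose (r-1) := by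
          rw [Finset.sum_const, smul_eq_mul]
      _ ≤ _ := Finset.sum_le_sum step1
  have step3 : ∑ a ∈ B, (Bd.filter (fun A => a ∈ A)).card
      = ∑ A ∈ Bd, (B.filter (fun a => a ∈ A)).card := by
    simp_rw [Finset.card_filter]
    exact Finset.sum_comm
  have step4 : ∑ A ∈ Bd, (B.filter (fun a => a ∈ A)).card ≤ ∑ _A ∈ Bd, r := by
    refine Finset.sum_le_sum ?_
    intro A hA
    have hAr : A.card = r := Finset.mem_powersetCard_univ.1 (Finset.mem_filter.1 hA).1
    calc (B.filter (fun a => a ∈ A)).card ≤ A.card :=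
          Finset.card_le_card (fun x hx => (Finset.mem_filter.1 hx).2)
      _ = r := hAr
  have step5 : ∑ _A ∈ Bd, r = Bd.card * r := by rw [Finset.sum_const, smul_eq_mul]
  calc B.card * ((n-2).choose (r-1)) ≤ _ := step2
    _ = _ := step3
    _ ≤ _ := step4
    _ = Bd.card * r := step5
    _ = r * Bd.card := Nat.mul_comm _ _

-- L6
lemma total_count :
    n ≤ (Finset.univ.filter (fun a : Fin n => ψ a ≠ a ∧ ψ (ψ a) = a)).card
      + ((Finset.univ.filter (fun a : Fin n => ψ a = a)).card
        + (Finset.univ.filter (fun a : Fin n => ψ (ψ a) ≠ a)).card) := by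
  classical
  have h1 := Finset.card_filter_add_card_filter_not
    (s := (Finset.univ : Finset (Fin n))) (p := fun a => ψ a ≠ a ∧ ψ (ψ a) = a)
  have hsub : Finset.univ.filter (fun a : Fin n => ¬(ψ a ≠ a ∧ ψ (ψ a) = a)) ⊆
      (Finset.univ.filter (fun a : Fin n => ψ a = a)) ∪
      (Finset.univ.filter (fun a : Fin n => ψ (ψ a) ≠ a)) := by
    intro a ha
    simp only [Finset.mem_filter, Finset.mem_univ, true_and] at ha
    simp only [Finset.mem_union, Finset.mem_filter, Finset.mem_univ, true_and]
    tauto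
  have h2 := Finset.card_le_card hsub
  have h3 := Finset.card_union_le (Finset.univ.filter (fun a : Fin n => ψ a = a))
    (Finset.univ.filter (fun a : Fin n => ψ (ψ a) ≠ a))
  have h4 : ((Finset.univ : Finset (Fin n))).card = n := by
    rw [Finset.card_univ, Fintype.card_fin]
  omega

end

set_option maxHeartbeats 1000000 in
lemma arith_main (r n : ℕ) (hr : 2 ≤ r) (hn : 2*r ≤ n) (δ : ℝ) (hδ1 : 1 ≤ δ)
    (hδε : δ ≤ ((r:ℝ) / (2 * ((2:ℝ)^r * r.factorial)))^2 * (n : ℝ) ^ r)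
    (g bd f b tc : ℕ)
    (hGBd : g + bd = n.choose r)
    (hFle : f.choose r ≤ bd)
    (hBle : b * ((n-2).choose (r-1)) ≤ r * bd)
    (htot : n ≤ tc + (f + b))
    (hyp : (n.choose r : ℝ) / 2 - δ ≤ (g:ℝ) / 2) :
    (n : ℝ) / 2 - (r : ℝ) * δ ^ ((1 : ℝ) / (r : ℝ)) ≤ (tc:ℝ) / 2 := by
  have hrR : (0:ℝ) < r := by exact_mod_cast Nat.lt_of_lt_of_le Nat.zero_lt_two hr
  have hrne : r ≠ 0 := by omega
  set s : ℝ := (r:ℝ) / (2 * ((2:ℝ)^r * r.factorial)) with hs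
  have hs0 : 0 < s := by positivity
  set ε : ℝ := s^2 with hε
  have hε0 : 0 < ε := by positivity
  have hs1 : s ≤ 1 := by
    rw [hs, div_le_one (by positivity)]
    have h1 : (r:ℝ) ≤ (2:ℝ)^r := by exact_mod_cast (Nat.lt_two_pow_self (n := r)).le
    have h2 : (1:ℝ) ≤ (r.factorial : ℝ) := by exact_mod_cast r.factorial_pos
    nlinarith
  have hε1 : ε ≤ 1 := by rw [hε]; nlinarith
  have hn0 : (0:ℝ) < n := by exact_mod_cast (by omega : 0 < n)
  have hδ0 : (0:ℝ) < δ := lt_of_lt_of_le one_pos hδ1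
  set D : ℝ := δ ^ ((1:ℝ)/(r:ℝ)) with hD
  have hD1 : 1 ≤ D := by
    rw [hD, show (1:ℝ) = δ ^ (0:ℝ) from (Real.rpow_zero δ).symm]
    exact Real.rpow_le_rpow_of_exponent_le hδ1 (by positivity)
  have hD0 : 0 < D := lt_of_lt_of_le one_pos hD1
  have hBdR : (bd : ℝ) ≤ 2 * δ := by
    have h1 : ((n.choose r : ℕ) : ℝ) = (g : ℝ) + (bd : ℝ) := by exact_mod_cast hGBd.symm
    rw [h1] at hyp
    linarith
  -- bound on fixed points
  have hfB : (f : ℝ) ≤ (3/2) * r * D := by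
    rcases lt_or_ge f r with h | h
    · have h' : (f:ℝ) ≤ r := by exact_mod_cast h.le
      nlinarith
    · have h1 : ((f : ℝ))^(r:ℕ) ≤ (r:ℝ)^(r:ℕ) * (2*δ) := by
        have h2 : ((f ^ r : ℕ) : ℝ) ≤ ((r ^ r * f.choose r : ℕ) : ℝ) := by
          exact_mod_cast aux_pow_le_choose r f h
        push_cast at h2
        have h3 : (f.choose r : ℝ) ≤ (bd : ℝ) := by exact_mod_cast hFle
        have h4 : (0:ℝ) ≤ (r:ℝ)^(r:ℕ) := by positivity
        nlinarith
      have e1 : (f : ℝ) = (((f:ℝ))^(r:ℕ)) ^ ((r:ℝ)⁻¹) :=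
        (Real.pow_rpow_inv_natCast (by positivity) hrne).symm
      have e2 : (((f:ℝ))^(r:ℕ)) ^ ((r:ℝ)⁻¹) ≤ ((r:ℝ)^(r:ℕ) * (2*δ)) ^ ((r:ℝ)⁻¹) :=
        Real.rpow_le_rpow (by positivity) h1 (by positivity)
      have e3 : ((r:ℝ)^(r:ℕ) * (2*δ)) ^ ((r:ℝ)⁻¹)
          = ((r:ℝ)^(r:ℕ))^((r:ℝ)⁻¹) * ((2*δ)) ^ ((r:ℝ)⁻¹) :=
        Real.mul_rpow (by positivity) (by positivity)
      have e4 : ((r:ℝ)^(r:ℕ))^((r:ℝ)⁻¹) = r := Real.pow_rpow_inv_natCast (by positivity) hrne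
      have e5 : ((2*δ):ℝ) ^ ((r:ℝ)⁻¹) = (2:ℝ)^((r:ℝ)⁻¹) * δ^((r:ℝ)⁻¹) :=
        Real.mul_rpow (by norm_num) hδ0.le
      have e6 : (2:ℝ)^((r:ℝ)⁻¹) ≤ 3/2 := by
        by_contra hcon
        push_neg at hcon
        have c1 : ((3:ℝ)/2)^(r:ℕ) ≤ ((2:ℝ)^((r:ℝ)⁻¹))^(r:ℕ) :=
          pow_le_pow_left₀ (by norm_num) hcon.le r
        have c2 : ((2:ℝ)^((r:ℝ)⁻¹))^(r:ℕ) = 2 := by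
          rw [← Real.rpow_natCast ((2:ℝ)^((r:ℝ)⁻¹)) r, ← Real.rpow_mul (by norm_num),
            inv_mul_cancel₀ (by exact_mod_cast hrne), Real.rpow_one]
        have c3 : (9/4:ℝ) ≤ ((3:ℝ)/2)^(r:ℕ) := by
          calc (9/4:ℝ) = (3/2)^(2:ℕ) := by norm_num
            _ ≤ (3/2)^(r:ℕ) := pow_le_pow_right₀ (by norm_num) hr
        linarith
      have e7 : δ^((r:ℝ)⁻¹) = D := by rw [hD, one_div]
      have e8 : (f : ℝ) ≤ (r:ℝ) * ((2:ℝ)^((r:ℝ)⁻¹) * D) := by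
        rw [e1]
        calc (((f:ℝ))^(r:ℕ)) ^ ((r:ℝ)⁻¹) ≤ ((r:ℝ)^(r:ℕ) * (2*δ)) ^ ((r:ℝ)⁻¹) := e2
          _ = (r:ℝ) * ((2:ℝ)^((r:ℝ)⁻¹) * D) := by rw [e3, e4, e5, e7]
      have h2pos : (r:ℝ) * ((2:ℝ)^((r:ℝ)⁻¹) * D) ≤ (r:ℝ) * ((3/2) * D) := by
        apply mul_le_mul_of_nonneg_left _ hrR.le
        exact mul_le_mul_of_nonneg_right e6 hD0.le
      calc (f : ℝ) ≤ (r:ℝ) * ((2:ℝ)^((r:ℝ)⁻¹) * D) := e8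
        _ ≤ (r:ℝ) * ((3/2) * D) := h2pos
        _ = (3/2) * r * D := by ring
  -- bound on non-2-periodic points
  have hbB : (b : ℝ) ≤ (1/2) * r * D := by
    have h1 : (b : ℝ) * (((n-2).choose (r-1) : ℕ):ℝ) ≤ (r:ℝ) * (bd:ℝ) := by
      exact_mod_cast hBle
    have h2 : (((n - r : ℕ):ℝ))^(r-1:ℕ) / ((r-1).factorial : ℝ)
        ≤ (((n-2).choose (r-1) : ℕ):ℝ) := by
      have h := Nat.pow_le_choose (α := ℝ) (r-1) (n-2)
      rw [show n - 2 + 1 - (r-1) = n - r from by omega] at h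
      exact_mod_cast h
    have hnr : ((n:ℝ)/2) ≤ ((n - r:ℕ):ℝ) := by
      rw [Nat.cast_sub (by omega)]
      have h2r : (2*(r:ℝ)) ≤ n := by exact_mod_cast hn
      linarith
    have h3 : ((n:ℝ)/2)^(r-1:ℕ) ≤ ((n-r:ℕ):ℝ)^(r-1:ℕ) :=
      pow_le_pow_left₀ (by positivity) hnr _
    have hfac0 : (0:ℝ) < ((r-1).factorial : ℝ) := by exact_mod_cast (r-1).factorial_pos
    have h5 : (b : ℝ) * ((n:ℝ)/2)^(r-1:ℕ)
        ≤ ((r-1).factorial : ℝ) * ((r:ℝ) * (2*δ)) := by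
      have hch : ((n-r:ℕ):ℝ)^(r-1:ℕ)
          ≤ (((n-2).choose (r-1) : ℕ):ℝ) * ((r-1).factorial : ℝ) := by
        rw [← div_le_iff₀ hfac0]
        exact h2
      have hb0 : (0:ℝ) ≤ (b : ℝ) := by positivity
      calc (b : ℝ) * ((n:ℝ)/2)^(r-1:ℕ)
          ≤ (b : ℝ) * ((n-r:ℕ):ℝ)^(r-1:ℕ) := mul_le_mul_of_nonneg_left h3 hb0
        _ ≤ (b : ℝ) * ((((n-2).choose (r-1) : ℕ):ℝ) * ((r-1).factorial : ℝ)) :=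
            mul_le_mul_of_nonneg_left hch hb0
        _ = ((r-1).factorial : ℝ) * ((b : ℝ) * (((n-2).choose (r-1) : ℕ):ℝ)) := by ring
        _ ≤ ((r-1).factorial : ℝ) * ((r:ℝ) * (bd:ℝ)) := mul_le_mul_of_nonneg_left h1 hfac0.le
        _ ≤ ((r-1).factorial : ℝ) * ((r:ℝ) * (2*δ)) :=
            mul_le_mul_of_nonneg_left (mul_le_mul_of_nonneg_left hBdR hrR.le) hfac0.le
    set P : ℝ := ((n:ℝ))^(r-1:ℕ) with hP
    have hP0 : 0 < P := by positivity
    have h6 : δ ≤ D * (s * P) := by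
      set q : ℝ := ((r-1:ℕ):ℝ)/(r:ℝ) with hq
      have hcast : ((r-1:ℕ):ℝ) = (r:ℝ) - 1 := by
        rw [Nat.cast_sub (by omega)]; norm_num
      have hq0 : 0 ≤ q := by positivity
      have hq2 : (1:ℝ)/2 ≤ q := by
        rw [hq, hcast, div_le_div_iff₀ (by norm_num) hrR]
        have : (2:ℝ) ≤ r := by exact_mod_cast hr
        linarith
      have hsplit : δ = δ^((1:ℝ)/(r:ℝ)) * δ^q := by
        rw [← Real.rpow_add hδ0]
        rw [show (1:ℝ)/(r:ℝ) + q = 1 by rw [hq, hcast]; field_simp; ring]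
        rw [Real.rpow_one]
      have t1 : δ^q ≤ (ε * (n:ℝ)^r)^q := Real.rpow_le_rpow hδ0.le hδε hq0
      have t2 : (ε * (n:ℝ)^r)^q = ε^q * (((n:ℝ))^(r:ℕ))^q :=
        Real.mul_rpow hε0.le (by positivity)
      have t3 : (((n:ℝ))^(r:ℕ))^q = P := by
        rw [← Real.rpow_natCast (n:ℝ) r, ← Real.rpow_mul hn0.le, hP,
          ← Real.rpow_natCast (n:ℝ) (r-1)]
        congr 1
        rw [hq]
        field_simp
      have t4 : ε^q ≤ ε^((1:ℝ)/2) := Real.rpow_le_rpow_of_exponent_ge hε0 hε1 hq2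
      have t5 : ε^((1:ℝ)/2) = s := by
        rw [hε, show (1:ℝ)/2 = (((2:ℕ):ℝ))⁻¹ by norm_num]
        exact Real.pow_rpow_inv_natCast hs0.le (by norm_num)
      have t6 : δ^q ≤ s * P := by
        calc δ^q ≤ (ε * (n:ℝ)^r)^q := t1
          _ = ε^q * P := by rw [t2, t3]
          _ ≤ s * P := mul_le_mul_of_nonneg_right (t4.trans_eq t5) hP0.le
      calc δ = δ^((1:ℝ)/(r:ℝ)) * δ^q := hsplit
        _ ≤ D * (s * P) := by
            rw [hD]
            exact mul_le_mul_of_nonneg_left t6 (Real.rpow_nonneg hδ0.le _)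
    have hfacR : (r.factorial : ℝ) = (r:ℝ) * ((r-1).factorial : ℝ) := by
      have hf : r.factorial = r * (r-1).factorial := by
        conv_lhs => rw [show r = (r-1) + 1 from by omega]
        rw [Nat.factorial_succ]
        congr 2
        omega
      exact_mod_cast hf
    have key : (b : ℝ) * (P/(2:ℝ)^(r-1:ℕ)) ≤ ((1/2) * r * D) * (P/(2:ℝ)^(r-1:ℕ)) := by
      have hdp : ((n:ℝ)/2)^(r-1:ℕ) = P/(2:ℝ)^(r-1:ℕ) := by rw [hP, div_pow]
      have h2p : ((2:ℝ))^(r:ℕ) = 2 * (2:ℝ)^(r-1:ℕ) := by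
        conv_lhs => rw [show r = (r-1) + 1 from by omega]
        ring
      have hstep : ((r-1).factorial : ℝ) * ((r:ℝ) * (2*δ))
          ≤ ((r-1).factorial : ℝ) * ((r:ℝ) * (2*(D * (s * P)))) := by
        apply mul_le_mul_of_nonneg_left _ hfac0.le
        apply mul_le_mul_of_nonneg_left _ hrR.le
        linarith
      calc (b : ℝ) * (P/(2:ℝ)^(r-1:ℕ)) = (b : ℝ) * ((n:ℝ)/2)^(r-1:ℕ) := by rw [hdp]
        _ ≤ ((r-1).factorial : ℝ) * ((r:ℝ) * (2*δ)) := h5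
        _ ≤ ((r-1).factorial : ℝ) * ((r:ℝ) * (2*(D * (s * P)))) := hstep
        _ = ((1/2) * r * D) * (P/(2:ℝ)^(r-1:ℕ)) := by
            rw [hs]
            have hpow0 : ((2:ℝ))^(r-1:ℕ) ≠ 0 := by positivity
            have hfac0' : ((r-1).factorial : ℝ) ≠ 0 := ne_of_gt hfac0
            have hfacne : (r.factorial : ℝ) ≠ 0 := by
              have : (0:ℝ) < (r.factorial : ℝ) := by exact_mod_cast r.factorial_pos
              exact ne_of_gt this
            field_simp
            rw [hfacR, h2p]
            ring
    have hPP : (0:ℝ) < P/(2:ℝ)^(r-1:ℕ) := by positivity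
    exact le_of_mul_le_mul_right key hPP
  have htotR : (n:ℝ) ≤ (tc : ℝ) + ((f:ℝ) + (b:ℝ)) := by exact_mod_cast htot
  have hfin : (n:ℝ)/2 - (r:ℝ) * D ≤ (tc : ℝ)/2 := by linarith
  rw [hD] at hfin
  exact hfin

set_option maxHeartbeats 1000000 in
/-- for r ≥ 2, n sufficiently large and 1 ≤ δ = o(n^r): if the induced
permutation of ψ on r-subsets has at least (1/2)C(n,r) − δ two-cycles, then ψ has at least
n/2 − r·δ^{1/r} two-cycles. (Numbers of 2-cycles are expressed as half the number of
corresponding ordered pairs.) -/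
theorem stmt_15 (r : ℕ) (hr : 2 ≤ r) :
    ∃ ε : ℝ, 0 < ε ∧ ∃ n₀ : ℕ, ∀ n : ℕ, n₀ ≤ n → ∀ δ : ℝ, 1 ≤ δ → δ ≤ ε * (n : ℝ) ^ r →
      ∀ ψ : Equiv.Perm (Fin n),
        ((n.choose r : ℝ) / 2 - δ ≤
          (((Finset.univ ×ˢ Finset.univ : Finset (Finset (Fin n) × Finset (Fin n))).filter
            (fun p => p.1.card = r ∧ p.1 ≠ p.2 ∧ p.1.image ψ = p.2 ∧ p.2.image ψ = p.1)).card : ℝ) / 2) →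
        ((n : ℝ) / 2 - (r : ℝ) * δ ^ ((1 : ℝ) / (r : ℝ)) ≤
          (((Finset.univ ×ˢ Finset.univ : Finset (Fin n × Fin n)).filter
            (fun p => p.1 ≠ p.2 ∧ ψ p.1 = p.2 ∧ ψ p.2 = p.1)).card : ℝ) / 2) := by
  classical
  refine ⟨((r:ℝ) / (2 * ((2:ℝ)^r * r.factorial)))^2, by positivity, 2*r, ?_⟩
  intro n hn δ hδ1 hδε ψ hyp
  rw [card_pairs_sets ψ r] at hyp
  rw [card_pairs_pts ψ]
  have hGBd : (((Finset.univ : Finset (Fin n)).powersetCard r).filter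
        (fun A => A ≠ A.image ψ ∧ (A.image ψ).image ψ = A)).card
      + (((Finset.univ : Finset (Fin n)).powersetCard r).filter
        (fun A => ¬(A ≠ A.image ψ ∧ (A.image ψ).image ψ = A))).card = n.choose r := by
    rw [Finset.card_filter_add_card_filter_not,
      Finset.card_powersetCard, Finset.card_univ, Fintype.card_fin]
  exact arith_main r n hr hn δ hδ1 hδε _ _ _ _ _ hGBd (fix_choose_le_bad ψ r)
    (bad_pts_bound ψ r (by omega)) (total_count ψ) hyp
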